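/- Fix k ≥ 3 and 0 ≤ i ≤ k-1, and let (d_p) be the positive solution of the recurrence d_{p+1} = ((i+pk)!/√((i+pk-k)!·(i+pk+k)!))·d_{p-1} + √((i+pk)!/(i+pk+k)!)·d_p with d_{-1}=0, d_0=1. Then the sequence (d_p) converges. -/

import Mathlib

open Nat

lemma fact_ineq1 (k n : ℕ) (hkn : k ≤ n) :
    (n+1) * (n ! * n !) ≤ (n - k + 1) * ((n - k)! * (n + k)!) := by
  have h1 := Nat.choose_mul_factorial_mul_factorial (show n ≤ 2*n+1 by omega)
  have h2 := Nat.choose_mul_factorial_mul_factorial (show n - k + 1 ≤ 2*n+1 by omega)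
  rw [show 2*n+1 - n = n+1 by omega] at h1
  rw [show 2*n+1 - (n-k+1) = n+k by omega] at h2
  have h5 : Nat.choose (2*n+1) (n - k + 1) ≤ Nat.choose (2*n+1) n := by
    have h := Nat.choose_le_middle (n - k + 1) (2*n+1)
    rwa [show (2*n+1)/2 = n by omega] at h
  have hpos : 0 < Nat.choose (2*n+1) n := Nat.choose_pos (by omega)
  have key : Nat.choose (2*n+1) n * ((n+1)! * n !) ≤
      Nat.choose (2*n+1) n * ((n - k + 1)! * (n+k)!) := by
    calc Nat.choose (2*n+1) n * ((n+1)! * n !)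
        = Nat.choose (2*n+1) n * n ! * (n+1)! := by ring
      _ = Nat.choose (2*n+1) (n-k+1) * (n-k+1)! * (n+k)! := by rw [h1, h2]
      _ ≤ Nat.choose (2*n+1) n * (n-k+1)! * (n+k)! :=
          Nat.mul_le_mul_right _ (Nat.mul_le_mul_right _ h5)
      _ = Nat.choose (2*n+1) n * ((n - k + 1)! * (n+k)!) := by ring
  have key2 := Nat.le_of_mul_le_mul_left key hpos
  calc (n+1) * (n ! * n !) = (n+1)! * n ! := by rw [Nat.factorial_succ]; ring
    _ ≤ (n-k+1)! * (n+k)! := key2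
    _ = (n - k + 1) * ((n - k)! * (n + k)!) := by rw [Nat.factorial_succ]; ring

lemma fact_ineq2 (k n : ℕ) (hk : 3 ≤ k) : n ! * (n+1)^3 ≤ (n+k)! := by
  have h1 : (n+3)! ≤ (n+k)! := Nat.factorial_le (by omega)
  have h2 : n ! * (n+1)^3 ≤ (n+3)! := by
    have he : (n+3)! = n ! * ((n+1)*(n+2)*(n+3)) := by
      rw [show n+3 = (n+2)+1 from rfl, Nat.factorial_succ,
        show n+2 = (n+1)+1 from rfl, Nat.factorial_succ, Nat.factorial_succ]
      ring
    rw [he]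
    exact Nat.mul_le_mul_left _ (by nlinarith)
  exact le_trans h2 h1

lemma coeff_bound (k n : ℕ) (hk : 3 ≤ k) (hkn : k ≤ n) :
    (n ! : ℝ) / Real.sqrt (((n - k)! : ℝ) * ((n + k)! : ℝ))
      + Real.sqrt ((n ! : ℝ) / ((n + k)! : ℝ)) ≤ 1 - 1/((n:ℝ)+1) := by
  set c : ℝ := 1/((n:ℝ)+1) with hc
  have hn3 : (3:ℝ) ≤ (n:ℝ) := by exact_mod_cast le_trans hk hkn
  have hk3 : (3:ℝ) ≤ (k:ℝ) := by exact_mod_cast hk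
  have hkn' : (k:ℝ) ≤ (n:ℝ) := by exact_mod_cast hkn
  have hc0 : 0 < c := by positivity
  have hcn : c * ((n:ℝ)+1) = 1 := by rw [hc]; exact one_div_mul_cancel (by positivity)
  have hc4 : c ≤ 1/4 := by
    rw [hc, div_le_div_iff₀ (by linarith) (by norm_num)]; linarith
  have hA : (0:ℝ) < ((n-k)! : ℝ) := by exact_mod_cast Nat.factorial_pos _
  have hB : (0:ℝ) < ((n+k)! : ℝ) := by exact_mod_cast Nat.factorial_pos _
  have hF : (0:ℝ) ≤ (n ! : ℝ) := by positivity
  have ha : (n ! : ℝ) / Real.sqrt (((n - k)! : ℝ) * ((n + k)! : ℝ)) ≤ 1 - (3/2)*c := by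
    have heq : (n ! : ℝ) / Real.sqrt (((n - k)! : ℝ) * ((n + k)! : ℝ))
        = Real.sqrt ((n ! : ℝ)^2 / (((n - k)! : ℝ) * ((n + k)! : ℝ))) := by
      rw [Real.sqrt_div (sq_nonneg _), Real.sqrt_sq hF]
    rw [heq]
    have h1 : (n ! : ℝ)^2 / (((n - k)! : ℝ) * ((n + k)! : ℝ)) ≤ (1 - (3/2)*c)^2 := by
      rw [div_le_iff₀ (by positivity)]
      have hcast : ((n:ℝ)+1) * ((n ! :ℝ) * (n ! :ℝ))
          ≤ ((n - k + 1 : ℕ):ℝ) * (((n - k)! :ℝ) * ((n + k)! :ℝ)) := by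
        exact_mod_cast fact_ineq1 k n hkn
      have hsub : ((n - k + 1 : ℕ):ℝ) = (n:ℝ) - (k:ℝ) + 1 := by
        push_cast [hkn]; ring
      rw [hsub] at hcast
      nlinarith [mul_pos hA hB, hc0, sq_nonneg c,
        mul_le_mul_of_nonneg_left hcast hc0.le,
        mul_nonneg (mul_nonneg hc0.le hc0.le) (mul_pos hA hB).le,
        mul_nonneg (mul_nonneg hc0.le (sub_nonneg.mpr hk3)) (mul_pos hA hB).le]
    calc Real.sqrt ((n ! : ℝ)^2 / (((n - k)! : ℝ) * ((n + k)! : ℝ)))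
        ≤ Real.sqrt ((1 - (3/2)*c)^2) := Real.sqrt_le_sqrt h1
      _ = 1 - (3/2)*c := Real.sqrt_sq (by linarith)
  have hb : Real.sqrt ((n ! : ℝ) / ((n + k)! : ℝ)) ≤ c/2 := by
    have h1 : (n ! : ℝ) / ((n + k)! : ℝ) ≤ (c/2)^2 := by
      rw [div_le_iff₀ hB]
      have hcast : (n ! :ℝ) * ((n:ℝ)+1)^3 ≤ ((n + k)! :ℝ) := by
        exact_mod_cast fact_ineq2 k n hk
      have h3 : c^3 * ((n:ℝ)+1)^3 = 1 := by
        rw [← mul_pow, hcn]; norm_num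
      have hF3 : (n ! :ℝ) ≤ c^3 * ((n + k)! :ℝ) := by
        have h4 := mul_le_mul_of_nonneg_left hcast (show (0:ℝ) ≤ c^3 by positivity)
        nlinarith [h3, h4]
      nlinarith [hF3,
        mul_nonneg (mul_nonneg (show (0:ℝ) ≤ 1/4 - c by linarith) (sq_nonneg c)) hB.le]
    calc Real.sqrt ((n ! : ℝ) / ((n + k)! : ℝ)) ≤ Real.sqrt ((c/2)^2) := Real.sqrt_le_sqrt h1
      _ = c/2 := Real.sqrt_sq (by positivity)
  linarith

/-- The sequence `(d_p)` is convergent. -/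
theorem stmt_10 (k i : ℕ) (hk : 3 ≤ k) (hi : i ≤ k - 1) (d : ℕ → ℝ)
    (hd0 : d 0 = 1)
    (hrec : ∀ p : ℕ, d (p + 1) =
      ((i + p * k)! : ℝ) /
          Real.sqrt (((i + p * k - k)! : ℝ) * ((i + p * k + k)! : ℝ)) *
          (if p = 0 then 0 else d (p - 1))
        + Real.sqrt (((i + p * k)! : ℝ) / ((i + p * k + k)! : ℝ)) * d p) :
    ∃ L : ℝ, Filter.Tendsto d Filter.atTop (nhds L) := by
  -- nonnegativity of d
  have hpair : ∀ p : ℕ, 0 ≤ d p ∧ 0 ≤ d (p+1) := by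
    intro p
    induction p with
    | zero =>
      refine ⟨by rw [hd0]; norm_num, ?_⟩
      have h0 := hrec 0
      rw [hd0] at h0
      norm_num at h0
      rw [h0]
      positivity
    | succ p ih =>
      refine ⟨ih.2, ?_⟩
      rw [hrec (p+1)]
      simp only [Nat.add_sub_cancel, if_neg (Nat.succ_ne_zero p)]
      exact add_nonneg
        (mul_nonneg (div_nonneg (Nat.cast_nonneg _) (Real.sqrt_nonneg _)) ih.1)
        (mul_nonneg (Real.sqrt_nonneg _) ih.2)
  have hd_nonneg : ∀ p, 0 ≤ d p := fun p => (hpair p).1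
  set M : ℕ → ℝ := fun p => max (d p) (d (p+1)) with hMdef
  have hM_nonneg : ∀ p, 0 ≤ M p := fun p => le_trans (hd_nonneg p) (le_max_left _ _)
  have hd_le_M : ∀ p, d (p+1) ≤ M p := fun p => le_max_right _ _
  have hd_le_M' : ∀ p, d p ≤ M p := fun p => le_max_left _ _
  set e : ℕ → ℝ := fun p => 1/(((i + p*k : ℕ):ℝ)+1) with hedef
  have he_pos : ∀ p, 0 < e p := by
    intro p; rw [hedef]; positivity
  have he_le1 : ∀ p, e p ≤ 1 := by
    intro p; rw [hedef]
    apply div_le_one_of_le₀ _ (by positivity)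
    simp only [le_add_iff_nonneg_left]
    positivity
  have he_anti : ∀ p, e (p+1) ≤ e p := by
    intro p; rw [hedef]
    apply one_div_le_one_div_of_le (by positivity)
    have : (i + p*k : ℕ) ≤ (i + (p+1)*k : ℕ) := by
      exact Nat.add_le_add_left (Nat.mul_le_mul_right k (Nat.le_succ p)) i
    have h := Nat.cast_le (α := ℝ).mpr this
    linarith
  -- main one-step estimate
  have hA : ∀ p, d (p+2) ≤ (1 - e (p+1)) * M p := by
    intro p
    have h := hrec (p+1)
    rw [if_neg (Nat.succ_ne_zero p)] at h
    simp only [Nat.add_sub_cancel] at h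
    have hkn : k ≤ i + (p+1)*k := by
      calc k = 1*k := (one_mul k).symm
        _ ≤ (p+1)*k := Nat.mul_le_mul_right k (by omega)
        _ ≤ i + (p+1)*k := Nat.le_add_left _ _
    have hcb := coeff_bound k (i + (p+1)*k) hk hkn
    have ha0 : (0:ℝ) ≤ ((i + (p+1) * k)! : ℝ) /
        Real.sqrt (((i + (p+1) * k - k)! : ℝ) * ((i + (p+1) * k + k)! : ℝ)) :=
      div_nonneg (Nat.cast_nonneg _) (Real.sqrt_nonneg _)
    have hb0 : (0:ℝ) ≤ Real.sqrt (((i + (p+1) * k)! : ℝ) / ((i + (p+1) * k + k)! : ℝ)) :=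
      Real.sqrt_nonneg _
    rw [h]
    have he1 : e (p+1) = 1/(((i + (p+1)*k : ℕ):ℝ)+1) := by rw [hedef]
    calc ((i + (p+1) * k)! : ℝ) /
          Real.sqrt (((i + (p+1) * k - k)! : ℝ) * ((i + (p+1) * k + k)! : ℝ)) * d p
        + Real.sqrt (((i + (p+1) * k)! : ℝ) / ((i + (p+1) * k + k)! : ℝ)) * d (p+1)
        ≤ ((i + (p+1) * k)! : ℝ) /
          Real.sqrt (((i + (p+1) * k - k)! : ℝ) * ((i + (p+1) * k + k)! : ℝ)) * M p
        + Real.sqrt (((i + (p+1) * k)! : ℝ) / ((i + (p+1) * k + k)! : ℝ)) * M p :=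
          add_le_add (mul_le_mul_of_nonneg_left (hd_le_M' p) ha0)
            (mul_le_mul_of_nonneg_left (hd_le_M p) hb0)
      _ = (((i + (p+1) * k)! : ℝ) /
          Real.sqrt (((i + (p+1) * k - k)! : ℝ) * ((i + (p+1) * k + k)! : ℝ))
          + Real.sqrt (((i + (p+1) * k)! : ℝ) / ((i + (p+1) * k + k)! : ℝ))) * M p := by ring
      _ ≤ (1 - e (p+1)) * M p := by
          rw [he1]
          exact mul_le_mul_of_nonneg_right hcb (hM_nonneg p)
  have hM_anti1 : ∀ p, M (p+1) ≤ M p := by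
    intro p
    apply max_le (hd_le_M p)
    calc d (p+2) ≤ (1 - e (p+1)) * M p := hA p
      _ ≤ 1 * M p := mul_le_mul_of_nonneg_right (by linarith [he_pos (p+1)]) (hM_nonneg p)
      _ = M p := one_mul _
  have hM_anti : Antitone M := antitone_nat_of_succ_le hM_anti1
  have hC : ∀ p, M (p+2) ≤ (1 - e (p+2)) * M p := by
    intro p
    apply max_le
    · calc d (p+2) ≤ (1 - e (p+1)) * M p := hA p
        _ ≤ (1 - e (p+2)) * M p :=
            mul_le_mul_of_nonneg_right (by linarith [he_anti (p+1)]) (hM_nonneg p)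
    · calc d (p+3) ≤ (1 - e (p+2)) * M (p+1) := hA (p+1)
        _ ≤ (1 - e (p+2)) * M p :=
            mul_le_mul_of_nonneg_left (hM_anti1 p) (by linarith [he_le1 (p+2)])
  have hbdd : BddBelow (Set.range M) := by
    refine ⟨0, ?_⟩
    rintro x ⟨p, rfl⟩
    exact hM_nonneg p
  have hlim : Filter.Tendsto M Filter.atTop (nhds (⨅ p, M p)) :=
    tendsto_atTop_ciInf hM_anti hbdd
  set L : ℝ := ⨅ p, M p with hLdef
  have hL0 : 0 ≤ L := le_ciInf hM_nonneg
  have hLM : ∀ p, L ≤ M p := fun p => ciInf_le hbdd p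
  have hLzero : L = 0 := by
    by_contra hne
    have hLpos : 0 < L := lt_of_le_of_ne hL0 (Ne.symm hne)
    have hsum : ∀ t : ℕ, L * ∑ s ∈ Finset.range t, e (2*s+2) ≤ M 0 := by
      intro t
      have htel : ∑ s ∈ Finset.range t, (M (2*s) - M (2*(s+1))) = M (2*0) - M (2*t) :=
        Finset.sum_range_sub' (fun s => M (2*s)) t
      have hterm : ∀ s, L * e (2*s+2) ≤ M (2*s) - M (2*(s+1)) := by
        intro s
        have h := hC (2*s)
        have h2 : e (2*s+2) * L ≤ e (2*s+2) * M (2*s) :=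
          mul_le_mul_of_nonneg_left (hLM _) (he_pos _).le
        have hidx : 2*(s+1) = 2*s+2 := by ring
        rw [hidx]
        nlinarith [h, h2]
      calc L * ∑ s ∈ Finset.range t, e (2*s+2)
          = ∑ s ∈ Finset.range t, L * e (2*s+2) := Finset.mul_sum _ _ _
        _ ≤ ∑ s ∈ Finset.range t, (M (2*s) - M (2*(s+1))) :=
            Finset.sum_le_sum (fun s _ => hterm s)
        _ = M (2*0) - M (2*t) := htel
        _ ≤ M 0 := by
            have := hM_nonneg (2*t)
            simp only [Nat.mul_zero]
            linarith
    have hk0 : (0:ℝ) < (k:ℝ) := by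
      have : (3:ℝ) ≤ (k:ℝ) := by exact_mod_cast hk
      linarith
    have hcomp : ∀ s : ℕ, 1/((s:ℝ)+1) ≤ (4*(k:ℝ)) * e (2*s+2) := by
      intro s
      have hnat : i + (2*s+2)*k + 1 ≤ 4*k*(s+1) := by
        have h1 : i + 1 ≤ k := by omega
        calc i + (2*s+2)*k + 1 ≤ k + (2*s+2)*k := by omega
          _ = (2*s+3)*k := by ring
          _ ≤ (4*(s+1))*k := Nat.mul_le_mul_right k (by omega)
          _ = 4*k*(s+1) := by ring
      have hcastn : (((i + (2*s+2)*k : ℕ)):ℝ) + 1 ≤ 4*(k:ℝ)*((s:ℝ)+1) := by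
        have := Nat.cast_le (α := ℝ).mpr hnat
        push_cast at this ⊢
        linarith
      rw [hedef]
      rw [mul_one_div, div_le_div_iff₀ (by positivity) (by positivity)]
      nlinarith [hcastn]
    have hbound : ∀ t : ℕ, ∑ s ∈ Finset.range t, 1/((s:ℝ)+1) ≤ 4*(k:ℝ)*(M 0)/L := by
      intro t
      have h1 : ∑ s ∈ Finset.range t, 1/((s:ℝ)+1)
          ≤ ∑ s ∈ Finset.range t, (4*(k:ℝ)) * e (2*s+2) :=
        Finset.sum_le_sum (fun s _ => hcomp s)
      rw [← Finset.mul_sum] at h1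
      have h2 : ∑ s ∈ Finset.range t, e (2*s+2) ≤ M 0 / L := by
        rw [le_div_iff₀ hLpos, mul_comm]
        exact hsum t
      calc ∑ s ∈ Finset.range t, 1/((s:ℝ)+1)
          ≤ (4*(k:ℝ)) * ∑ s ∈ Finset.range t, e (2*s+2) := h1
        _ ≤ (4*(k:ℝ)) * (M 0 / L) := mul_le_mul_of_nonneg_left h2 (by positivity)
        _ = 4*(k:ℝ)*(M 0)/L := by ring
    obtain ⟨t, ht⟩ := (Filter.tendsto_atTop.mp
      Real.tendsto_sum_range_one_div_nat_succ_atTop (4*(k:ℝ)*(M 0)/L + 1)).exists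
    have := hbound t
    simp only [one_div] at this ht
    linarith
  rw [hLzero] at hlim
  have hd1 : Filter.Tendsto (fun p => d (p+1)) Filter.atTop (nhds 0) :=
    squeeze_zero (fun p => hd_nonneg _) hd_le_M hlim
  exact ⟨0, (Filter.tendsto_add_atTop_iff_nat 1).mp hd1⟩
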